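/- arXiv:2202.13104 — 2 statements merged into one kernel-verified Lean document; each statement's English description precedes it below -/
import Mathlib

section
/- For every real x with 0 < x < 1, the payoff difference in the bribery game equals the payoff difference in the IPGG shifted by the bribery term: f̄_C(x) − f̄_D(x) = (f_C(x) − f_D(x)) + ((N−1)/N)·γ·h·(q−p). -/
/-- IPGG payoff of a focal cooperator when k of the other N−1 group members cooperate. -/
noncomputable def piC (N : ℕ) (b c τ β rp α F : ℝ) (k : ℕ) : ℝ :=
  b + F * c * ((k : ℝ) + 1) / N - c - τ -
    α * β * τ * rp * ((if 1 ≤ k then (1 : ℝ) else 0) + ((N : ℝ) - 1 - k) / ((k : ℝ) + 1))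

/-- IPGG payoff of a focal defector when k of the other N−1 group members cooperate. -/
noncomputable def piD (N : ℕ) (b c τ β rp α F : ℝ) (k : ℕ) : ℝ :=
  b + F * c * (k : ℝ) / N - τ -
    (1 - α) * β * τ * rp * ((k : ℝ) / ((N : ℝ) - k) + (if k ≤ N - 2 then (1 : ℝ) else 0))

/-- Bribery-game payoff of a focal cooperator. -/
noncomputable def piCbar (N : ℕ) (b c τ β rp α F h γ p q : ℝ) (k : ℕ) : ℝ :=
  piC N b c τ β rp α F k - ((N : ℝ) - 1) / N * p * γ * h
    + γ * h / N * (p * k + q * ((N : ℝ) - 1 - k))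

/-- Bribery-game payoff of a focal defector. -/
noncomputable def piDbar (N : ℕ) (b c τ β rp α F h γ p q : ℝ) (k : ℕ) : ℝ :=
  piD N b c τ β rp α F k - ((N : ℝ) - 1) / N * q * γ * h
    + γ * h / N * (p * k + q * ((N : ℝ) - 1 - k))

/-- Binomial average of a payoff function at cooperator frequency x. -/
noncomputable def avgPayoff (N : ℕ) (π : ℕ → ℝ) (x : ℝ) : ℝ :=
  ∑ k ∈ Finset.range N, ((N - 1).choose k : ℝ) * x ^ k * (1 - x) ^ (N - 1 - k) * π k

lemma weights_sum_one (N : ℕ) (hN : 1 ≤ N) (x : ℝ) :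
    ∑ k ∈ Finset.range N, ((N - 1).choose k : ℝ) * x ^ k * (1 - x) ^ (N - 1 - k) = 1 := by
  have h := add_pow x (1 - x) (N - 1)
  have hx : x + (1 - x) = 1 := by ring
  rw [hx, one_pow] at h
  have hN' : N - 1 + 1 = N := Nat.succ_pred_eq_of_pos hN
  rw [hN'] at h
  rw [show (∑ k ∈ Finset.range N, ((N - 1).choose k : ℝ) * x ^ k * (1 - x) ^ (N - 1 - k))
      = ∑ k ∈ Finset.range N, x ^ k * (1 - x) ^ (N - 1 - k) * ((N - 1).choose k : ℝ) from
    Finset.sum_congr rfl fun k _ => by ring]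
  exact h.symm

/-- For x ∈ (0,1), the payoff difference in the bribery game equals the payoff
difference in the IPGG shifted by the bribery term:
f̄_C(x) − f̄_D(x) = (f_C(x) − f_D(x)) + ((N−1)/N)·γ·h·(q−p). -/
theorem bg_payoff_difference_shift (N : ℕ) (hN : 2 ≤ N) (b c τ β rp α F h γ p q : ℝ)
    (hc : 0 < c) (hτ : 0 < τ) (hβ : 0 < β) (hrp : 0 < rp) (hα0 : 0 ≤ α) (hα1 : α ≤ 1)
    (hh : 0 < h) (hγ0 : 0 < γ) (hγ1 : γ ≤ 1) (hp0 : 0 ≤ p) (hp1 : p ≤ 1)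
    (hq0 : 0 ≤ q) (hq1 : q ≤ 1)
    (x : ℝ) (hx : 0 < x) (hx1 : x < 1) :
    avgPayoff N (piCbar N b c τ β rp α F h γ p q) x
      - avgPayoff N (piDbar N b c τ β rp α F h γ p q) x
      = (avgPayoff N (piC N b c τ β rp α F) x - avgPayoff N (piD N b c τ β rp α F) x)
        + ((N : ℝ) - 1) / N * γ * h * (q - p) := by
  have hw := weights_sum_one N (le_trans one_le_two hN) x
  unfold avgPayoff
  rw [← Finset.sum_sub_distrib, ← Finset.sum_sub_distrib]
  have key : ∀ k ∈ Finset.range N,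
      ((N - 1).choose k : ℝ) * x ^ k * (1 - x) ^ (N - 1 - k) * piCbar N b c τ β rp α F h γ p q k
        - ((N - 1).choose k : ℝ) * x ^ k * (1 - x) ^ (N - 1 - k) * piDbar N b c τ β rp α F h γ p q k
      = (((N - 1).choose k : ℝ) * x ^ k * (1 - x) ^ (N - 1 - k) * piC N b c τ β rp α F k
          - ((N - 1).choose k : ℝ) * x ^ k * (1 - x) ^ (N - 1 - k) * piD N b c τ β rp α F k)
        + (((N : ℝ) - 1) / N * γ * h * (q - p))
          * (((N - 1).choose k : ℝ) * x ^ k * (1 - x) ^ (N - 1 - k)) := by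
    intro k _
    unfold piCbar piDbar
    ring
  rw [Finset.sum_congr rfl key, Finset.sum_add_distrib, ← Finset.mul_sum, hw, mul_one]
end

section
/- Suppose cooperators are more inclined to bribe than defectors, i.e., p > q. Then corruption raises both cooperation thresholds, F̄_min > F_min and F̄_max > F_max; moreover, if F̄_min < F < F_max and x*_Q, x*_Q̄ ∈ (0,1) are the unique zeros of Q and Q̄ respectively, then x*_Q < x*_Q̄. (Hence corruption shrinks the basin of attraction of full cooperation when cooperators are more inclined to offer bribes.) -/
/-- The IPGG gradient function Q. -/
noncomputable def Qipgg (N : ℕ) (c τ β rp α F : ℝ) (x : ℝ) : ℝ :=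
  F * c / N - c - 2 * α * β * τ * rp + β * τ * rp
    - α * β * τ * rp * (∑ k ∈ Finset.range (N - 1), (1 - x) ^ (k + 1))
    + (1 - α) * β * τ * rp * (∑ k ∈ Finset.range (N - 1), x ^ (k + 1))

/-- The lower threshold F_min for the pool multiplier in the IPGG. -/
noncomputable def Fmin (N : ℕ) (c τ β rp α : ℝ) : ℝ :=
  N * (c - β * τ * rp + 2 * α * β * τ * rp - (1 - α) * β * τ * rp * ((N : ℝ) - 1)) / c

/-- The upper threshold F_max for the pool multiplier in the IPGG. -/
noncomputable def Fmax (N : ℕ) (c τ β rp α : ℝ) : ℝ :=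
  N * (c - β * τ * rp + α * β * τ * rp * ((N : ℝ) + 1)) / c

/-- The bribery-game gradient function Q̄(x) = Q(x) + ((N−1)/N)·γ·h·(q−p). -/
noncomputable def Qbar (N : ℕ) (c τ β rp α F h γ p q : ℝ) (x : ℝ) : ℝ :=
  Qipgg N c τ β rp α F x + ((N : ℝ) - 1) / N * γ * h * (q - p)

/-- The lower threshold F̄_min = F_min − (N−1)·γ·h·(q−p)/c for the bribery game. -/
noncomputable def Fbarmin (N : ℕ) (c τ β rp α h γ p q : ℝ) : ℝ :=
  Fmin N c τ β rp α - ((N : ℝ) - 1) * γ * h * (q - p) / c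

/-- The upper threshold F̄_max = F_max − (N−1)·γ·h·(q−p)/c for the bribery game. -/
noncomputable def Fbarmax (N : ℕ) (c τ β rp α h γ p q : ℝ) : ℝ :=
  Fmax N c τ β rp α - ((N : ℝ) - 1) * γ * h * (q - p) / c

/-- If cooperators are more inclined to bribe than defectors (p > q), then corruption
raises both cooperation thresholds, F̄_min > F_min and F̄_max > F_max; moreover, if
F̄_min < F < F_max and x*_Q, x*_Q̄ ∈ (0,1) are the unique zeros of Q and Q̄
respectively, then x*_Q < x*_Q̄: corruption shrinks the basin of attraction of
full cooperation. -/
theorem bg_corruption_hinders_cooperation (N : ℕ) (hN : 2 ≤ N) (c τ β rp α h γ p q : ℝ)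
    (hc : 0 < c) (hτ : 0 < τ) (hβ : 0 < β) (hrp : 0 < rp) (hα0 : 0 ≤ α) (hα1 : α ≤ 1)
    (hh : 0 < h) (hγ0 : 0 < γ) (hγ1 : γ ≤ 1) (hp0 : 0 ≤ p) (hp1 : p ≤ 1)
    (hq0 : 0 ≤ q) (hq1 : q ≤ 1) (hpq : q < p) :
    Fmin N c τ β rp α < Fbarmin N c τ β rp α h γ p q ∧
    Fmax N c τ β rp α < Fbarmax N c τ β rp α h γ p q ∧
    ∀ F xQ xQb : ℝ,
      Fbarmin N c τ β rp α h γ p q < F → F < Fmax N c τ β rp α →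
      0 < xQ → xQ < 1 → Qipgg N c τ β rp α F xQ = 0 →
      (∀ y : ℝ, 0 < y → y < 1 → Qipgg N c τ β rp α F y = 0 → y = xQ) →
      0 < xQb → xQb < 1 → Qbar N c τ β rp α F h γ p q xQb = 0 →
      (∀ y : ℝ, 0 < y → y < 1 → Qbar N c τ β rp α F h γ p q y = 0 → y = xQb) →
      xQ < xQb := by
  have hN1 : (1 : ℝ) < (N : ℝ) := by exact_mod_cast Nat.lt_of_lt_of_le one_lt_two hN
  have hNpos : (0 : ℝ) < (N : ℝ) := lt_trans one_pos hN1
  have hkey : 0 < ((N : ℝ) - 1) * γ * h * (p - q) / c :=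
    div_pos (mul_pos (mul_pos (mul_pos (by linarith : (0:ℝ) < (N:ℝ)-1) hγ0) hh) (by linarith)) hc
  have hneg : ((N : ℝ) - 1) * γ * h * (q - p) / c =
      -(((N : ℝ) - 1) * γ * h * (p - q) / c) := by ring
  refine ⟨?_, ?_, ?_⟩
  · unfold Fbarmin; linarith [hkey, hneg]
  · unfold Fbarmax; linarith [hkey, hneg]
  · intro F xQ xQb _ _ hx0 hx1 hQx _ hb0 hb1 hQb _
    -- Qipgg is monotone on [0,1]
    have mono : ∀ x y : ℝ, 0 ≤ x → x ≤ y → y ≤ 1 →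
        Qipgg N c τ β rp α F x ≤ Qipgg N c τ β rp α F y := by
      intro x y hx hxy hy1
      unfold Qipgg
      have hA : 0 ≤ α * β * τ * rp := by positivity
      have hB : 0 ≤ (1 - α) * β * τ * rp := by
        have : 0 ≤ 1 - α := by linarith
        positivity
      have hS1 : (∑ k ∈ Finset.range (N - 1), (1 - y) ^ (k + 1)) ≤
          ∑ k ∈ Finset.range (N - 1), (1 - x) ^ (k + 1) := by
        apply Finset.sum_le_sum
        intro k _
        exact pow_le_pow_left₀ (by linarith) (by linarith) _
      have hS2 : (∑ k ∈ Finset.range (N - 1), x ^ (k + 1)) ≤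
          ∑ k ∈ Finset.range (N - 1), y ^ (k + 1) := by
        apply Finset.sum_le_sum
        intro k _
        exact pow_le_pow_left₀ hx hxy _
      nlinarith [mul_le_mul_of_nonneg_left hS1 hA, mul_le_mul_of_nonneg_left hS2 hB]
    have hD : ((N : ℝ) - 1) / N * γ * h * (q - p) < 0 := by
      have h1 : 0 < ((N : ℝ) - 1) / N * γ * h := by
        apply mul_pos (mul_pos (div_pos (by linarith) hNpos) hγ0) hh
      nlinarith
    by_contra hle
    push_neg at hle
    have h2 : Qipgg N c τ β rp α F xQb ≤ Qipgg N c τ β rp α F xQ :=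
      mono xQb xQ (le_of_lt hb0) hle (le_of_lt hx1)
    have h3 : Qbar N c τ β rp α F h γ p q xQb =
        Qipgg N c τ β rp α F xQb + ((N : ℝ) - 1) / N * γ * h * (q - p) := rfl
    rw [hQx] at h2
    rw [h3] at hQb
    linarith
end
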